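/- Let B = B_{n−1,n}·B_{n−2,n−1}⋯B_{2,3}·B_{1,2} where each B_{i,i+1} is the identity matrix except for the 2×2 block [[G_{1,i+1}, −1],[1,0]] at rows/columns i, i+1 (over a commutative ring). Then B equals the matrix whose first column is (G_{1,2}, G_{1,3}, …, G_{1,n}, 1)ᵀ, with −1 in positions (k, k+1) for 1 ≤ k ≤ n−1 and zeros elsewhere. -/

import Mathlib

open Matrix

/-- The matrix `B_{i,i+1}` (0-indexed block at rows/columns `k.castSucc`, `k.succ`)
with block `[[g, -1],[1,0]]`. -/
def BmatK {R : Type*} [CommRing R] {m : ℕ} (k : Fin (m + 1)) (g : R) :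
    Matrix (Fin (m + 2)) (Fin (m + 2)) R :=
  fun j l =>
    if j = k.castSucc ∧ l = k.castSucc then g
    else if j = k.castSucc ∧ l = k.succ then -1
    else if j = k.succ ∧ l = k.castSucc then 1
    else if j = k.succ ∧ l = k.succ then 0
    else if j = l then 1 else 0


lemma BmatK_mul_apply {R : Type*} [CommRing R] {m : ℕ} (k : Fin (m + 1)) (g : R)
    (P : Matrix (Fin (m + 2)) (Fin (m + 2)) R) (j l : Fin (m + 2)) :
    (BmatK k g * P) j l =
      if j = k.castSucc then g * P k.castSucc l - P k.succ l
      else if j = k.succ then P k.castSucc l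
      else P j l := by
  have hab : k.castSucc ≠ k.succ := (Fin.castSucc_lt_succ (i := k)).ne
  rw [Matrix.mul_apply]
  by_cases hja : j = k.castSucc
  · subst hja
    have h : ∀ i, BmatK k g k.castSucc i * P i l =
        (if i = k.castSucc then g * P i l else 0) + (if i = k.succ then -P i l else 0) := by
      intro i
      by_cases h1 : i = k.castSucc
      · subst h1; simp [BmatK, hab]
      · by_cases h2 : i = k.succ
        · subst h2; simp [BmatK, hab, hab.symm]
        · simp [BmatK, h1, h2, Ne.symm h1]
    simp only [h]
    rw [Finset.sum_add_distrib]
    simp [Finset.sum_ite_eq', hab, sub_eq_add_neg]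
  · by_cases hjb : j = k.succ
    · subst hjb
      have h : ∀ i, BmatK k g k.succ i * P i l =
          (if i = k.castSucc then P i l else 0) := by
        intro i
        by_cases h1 : i = k.castSucc
        · subst h1; simp [BmatK, hab, hab.symm]
        · by_cases h2 : i = k.succ
          · subst h2; simp [BmatK, hab.symm]
          · simp [BmatK, h1, h2, Ne.symm h2]
      simp [h, Finset.sum_ite_eq', hab, hja]
    · have h : ∀ i, BmatK k g j i * P i l = (if i = j then P i l else 0) := by
        intro i
        by_cases h1 : i = j
        · subst h1; simp [BmatK, hja, hjb]
        · simp [BmatK, hja, hjb, Ne.symm h1, h1]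
      simp [h, Finset.sum_ite_eq', hja, hjb]

lemma aux_prod {R : Type*} [CommRing R] {m : ℕ} (G : Fin (m + 2) → Fin (m + 2) → R) :
    ∀ t : ℕ, (ht : t ≤ m + 1) →
    ((List.ofFn fun k : Fin t =>
        BmatK (⟨(k : ℕ), by omega⟩ : Fin (m + 1)) (G 0 ⟨(k : ℕ) + 1, by omega⟩)).reverse).prod =
      fun j l : Fin (m + 2) =>
        if hjt : (j : ℕ) < t then
          (if (l : ℕ) = 0 then G 0 ⟨(j : ℕ) + 1, by omega⟩
           else if (l : ℕ) = (j : ℕ) + 1 then -1 else 0)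
        else if (j : ℕ) = t then (if (l : ℕ) = 0 then 1 else 0)
        else if j = l then 1 else 0 := by
  intro t
  induction t with
  | zero =>
    intro ht
    funext j l
    simp only [List.ofFn_zero, List.reverse_nil, List.prod_nil, Matrix.one_apply, Fin.ext_iff]
    split_ifs <;> first | rfl | omega
  | succ t ih =>
    intro ht
    rw [List.ofFn_succ']
    simp only [List.concat_eq_append, List.reverse_append, List.reverse_singleton,
      List.singleton_append, List.prod_cons]
    have hlist : (List.ofFn fun i : Fin t =>
        BmatK (⟨((i.castSucc : Fin (t+1)) : ℕ), by omega⟩ : Fin (m + 1))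
          (G 0 ⟨((i.castSucc : Fin (t+1)) : ℕ) + 1, by omega⟩)) =
        (List.ofFn fun k : Fin t =>
        BmatK (⟨(k : ℕ), by omega⟩ : Fin (m + 1)) (G 0 ⟨(k : ℕ) + 1, by omega⟩)) := by
      rfl
    rw [hlist, ih (by omega)]
    funext j l
    erw [BmatK_mul_apply]
    simp only [Fin.castSucc_mk, Fin.succ_mk, Fin.val_last, Fin.ext_iff, Fin.val_mk]
    have h1 : ¬ (t < t) := by omega
    have h1' : ¬ (t + 1 < t + 1) := by omega
    have h2 : ¬ (t + 1 < t) := by omega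
    have h3 : ¬ (t + 1 = t) := by omega
    have h4 : t < t + 1 := by omega
    by_cases hja : (j : ℕ) = t
    · simp only [hja, dif_neg h1, dif_neg h2, if_neg h3, dif_pos h4, if_true, if_pos rfl]
      by_cases hl : (l : ℕ) = 0
      · simp [hl, show ¬ (t + 1 = 0) by omega]
      · by_cases hl2 : (l : ℕ) = t + 1
        · simp [hl, hl2]
        · simp [hl, hl2, show ¬ (t + 1 = (l : ℕ)) from fun h => hl2 h.symm]
    · by_cases hjb : (j : ℕ) = t + 1
      · simp only [hjb, if_neg h3, if_pos rfl, dif_neg h1, dif_neg h1', if_true]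
      · simp only [if_neg hja, if_neg hjb]
        by_cases hlt : (j : ℕ) < t
        · rw [dif_pos hlt, dif_pos (show (j : ℕ) < t + 1 by omega)]
        · rw [dif_neg hlt, dif_neg (show ¬ (j : ℕ) < t + 1 by omega)]

theorem B_product_formula {R : Type*} [CommRing R] {m : ℕ}
    (G : Fin (m + 2) → Fin (m + 2) → R) :
    ((List.ofFn fun k : Fin (m + 1) => BmatK k (G 0 k.succ)).reverse).prod =
      fun j l : Fin (m + 2) =>
        if (l : ℕ) = 0 then
          (if hj : (j : ℕ) < m + 1 then G 0 ⟨(j : ℕ) + 1, by omega⟩ else 1)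
        else if (l : ℕ) = (j : ℕ) + 1 then -1
        else 0 := by
  have h := aux_prod G (m + 1) le_rfl
  have hl : (List.ofFn fun k : Fin (m + 1) => BmatK k (G 0 k.succ)) =
      (List.ofFn fun k : Fin (m + 1) =>
        BmatK (⟨(k : ℕ), by omega⟩ : Fin (m + 1)) (G 0 ⟨(k : ℕ) + 1, by omega⟩)) := rfl
  rw [hl, h]
  funext j l
  by_cases hj : (j : ℕ) < m + 1
  · rw [dif_pos hj]
    by_cases hl0 : (l : ℕ) = 0
    · rw [if_pos hl0, if_pos hl0, dif_pos hj]
    · rw [if_neg hl0, if_neg hl0]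
  · rw [dif_neg hj, if_pos (show (j : ℕ) = m + 1 by have := j.isLt; omega)]
    by_cases hl0 : (l : ℕ) = 0
    · rw [if_pos hl0, if_pos hl0, dif_neg hj]
    · rw [if_neg hl0, if_neg hl0,
        if_neg (show ¬ (l : ℕ) = (j : ℕ) + 1 by have := l.isLt; have := j.isLt; omega)]
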